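/- Let 1 ≤ k ≤ n ≤ q with q a prime power, let 1 ≤ d_1 < d_2 < ... < d_k ≤ n be integers, let α_1, ..., α_n ∈ F_q be distinct elements, and for i ∈ [k] set f_i = (x − α_{d_i+1})(x − α_{d_i+2}) ⋯ (x − α_n) ∈ F_q[x]. Let 𝒞 ⊆ F_q^n be the code spanned by the rows of the k × n matrix G whose i-th row is (f_i(α_1), f_i(α_2), ..., f_i(α_n)). Then dim(𝒞) = k and d_r(𝒞) = d_r for all r ∈ [k]; moreover, for each r ∈ [k] the subspace spanned by the first r rows of G has support of cardinality exactly d_r, so 𝒞 satisfies the chain condition. -/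

import Mathlib

open Module

variable {F : Type*} [Field F] [Fintype F]

/-- The support of a subspace of `F^n`. -/
def hsupp {n : ℕ} (𝒟 : Submodule F (Fin n → F)) : Set (Fin n) :=
  {i | ∃ x ∈ 𝒟, x i ≠ 0}

/-- The (Hamming) weight of a subspace of `F^n`: the cardinality of its support. -/
noncomputable def hwt {n : ℕ} (𝒟 : Submodule F (Fin n → F)) : ℕ :=
  (hsupp 𝒟).ncard

/-- The `r`-th generalized Hamming weight of a linear block code `𝒞 ⊆ F^n`. -/
noncomputable def hgw {n : ℕ} (𝒞 : Submodule F (Fin n → F)) (r : ℕ) : ℕ :=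
  sInf {w | ∃ 𝒟 : Submodule F (Fin n → F),
    𝒟 ≤ 𝒞 ∧ r ≤ Module.finrank F 𝒟 ∧ hwt 𝒟 = w}

/-- Greedy `r`-subcodes of a linear block code. -/
def IsGreedyH {n : ℕ} (𝒞 : Submodule F (Fin n → F)) : ℕ → Submodule F (Fin n → F) → Prop
  | 0, 𝒟 => 𝒟 = ⊥
  | 1, 𝒟 => 𝒟 ≤ 𝒞 ∧ Module.finrank F 𝒟 = 1 ∧ hwt 𝒟 = hgw 𝒞 1
  | (r + 2), 𝒟 => 𝒟 ≤ 𝒞 ∧ Module.finrank F 𝒟 = r + 2 ∧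
      (∃ 𝒟', IsGreedyH 𝒞 (r + 1) 𝒟' ∧ 𝒟' ≤ 𝒟) ∧
      (∀ ℰ : Submodule F (Fin n → F), ℰ ≤ 𝒞 → Module.finrank F ℰ = r + 2 →
        (∃ 𝒟', IsGreedyH 𝒞 (r + 1) 𝒟' ∧ 𝒟' ≤ ℰ) → hwt 𝒟 ≤ hwt ℰ)

/-- The `r`-th greedy weight of a linear block code. -/
noncomputable def hgreedyWt {n : ℕ} (𝒞 : Submodule F (Fin n → F)) (r : ℕ) : ℕ :=
  sInf {w | ∃ 𝒟, IsGreedyH 𝒞 r 𝒟 ∧ hwt 𝒟 = w}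

/-- The chain condition for a linear block code. -/
def ChainConditionH {n : ℕ} (𝒞 : Submodule F (Fin n → F)) : Prop :=
  ∃ 𝒟 : ℕ → Submodule F (Fin n → F),
    𝒟 0 = ⊥ ∧ 𝒟 (Module.finrank F 𝒞) = 𝒞 ∧
    (∀ r, r < Module.finrank F 𝒞 → 𝒟 r < 𝒟 (r + 1)) ∧
    (∀ r, 1 ≤ r → r ≤ Module.finrank F 𝒞 → hwt (𝒟 r) = hgw 𝒞 r)

lemma card_filter_lt_fin (N m : ℕ) (h : m ≤ N) :
    (Finset.univ.filter (fun l : Fin N => l.1 < m)).card = m := by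
  have : Finset.univ.filter (fun l : Fin N => l.1 < m) = Finset.image (Fin.castLE h) Finset.univ := by
    ext l
    simp only [Finset.mem_filter, Finset.mem_univ, true_and, Finset.mem_image]
    constructor
    · intro hl; exact ⟨⟨l.1, hl⟩, rfl⟩
    · rintro ⟨j, rfl⟩; exact j.2
  rw [this, Finset.card_image_of_injective _ (Fin.castLE_injective h)]
  simp

lemma card_filter_le_fin (N m : ℕ) (h : m ≤ N) :
    (Finset.univ.filter (fun l : Fin N => m ≤ l.1)).card = N - m := by
  have h2 := Finset.card_filter_add_card_filter_not (s := (Finset.univ : Finset (Fin N)))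
    (fun l : Fin N => l.1 < m)
  have h3 : (Finset.univ.filter (fun l : Fin N => ¬ l.1 < m))
      = Finset.univ.filter (fun l : Fin N => m ≤ l.1) := by
    apply Finset.filter_congr; intro l _; simp [not_lt]
  rw [card_filter_lt_fin N m h, h3] at h2
  simp only [Finset.card_univ, Fintype.card_fin] at h2
  omega

open Polynomial in
theorem reedSolomon_subcode_ghws {n k : ℕ} (hk : 1 ≤ k) (hkn : k ≤ n)
    (hq : n ≤ Fintype.card F)
    (d : Fin k → ℕ) (hmono : StrictMono d) (hpos : ∀ r, 1 ≤ d r) (hlast : ∀ r, d r ≤ n)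
    (α : Fin n → F) (hα : Function.Injective α)
    (f : Fin k → Polynomial F)
    (hf : ∀ i : Fin k, f i = ∏ s ∈ Finset.univ.filter (fun s : Fin n => d i ≤ s.1),
      (X - Polynomial.C (α s)))
    (G : Fin k → (Fin n → F)) (hG : ∀ i l, G i l = (f i).eval (α l))
    (𝒞 : Submodule F (Fin n → F)) (h𝒞 : 𝒞 = Submodule.span F (Set.range G)) :
    Module.finrank F 𝒞 = k ∧
    (∀ r : Fin k, hgw 𝒞 (r.1 + 1) = d r) ∧
    (∀ r : Fin k, hwt (Submodule.span F (G '' {i | i ≤ r})) = d r) ∧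
    ChainConditionH 𝒞 := by
  classical
  -- entries : G i l = 0 ↔ d i ≤ l
  have hGzero : ∀ (i : Fin k) (l : Fin n), G i l = 0 ↔ d i ≤ l.1 := by
    intro i l
    rw [hG, hf i, Polynomial.eval_prod]
    simp only [Polynomial.eval_sub, Polynomial.eval_X, Polynomial.eval_C]
    rw [Finset.prod_eq_zero_iff]
    constructor
    · rintro ⟨s, hs, h0⟩
      have hls : α l = α s := by
        have := sub_eq_zero.mp h0; exact this
      have : l = s := hα hls
      subst this
      exact (Finset.mem_filter.mp hs).2
    · intro h
      exact ⟨l, by simp [h], by ring⟩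
  -- linear independence of the rows
  have hGli : LinearIndependent F G := by
    rw [Fintype.linearIndependent_iff]
    intro c hc
    have key : ∀ t : ℕ, ∀ j : Fin k, k - t ≤ j.1 → c j = 0 := by
      intro t
      induction t with
      | zero => intro j hj; exact absurd hj (by omega)
      | succ t ih =>
        intro j hj
        have hdj : d j - 1 < n := by have := hlast j; have := hpos j; omega
        set p : Fin n := ⟨d j - 1, hdj⟩ with hp
        have hcp := congrFun hc p
        simp only [Finset.sum_apply, Pi.smul_apply, smul_eq_mul, Pi.zero_apply] at hcp
        rw [Finset.sum_eq_single j] at hcp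
        · have hne : G j p ≠ 0 := by
            rw [Ne, hGzero]
            simp only [hp]
            have := hpos j; omega
          exact (mul_eq_zero.mp hcp).resolve_right hne
        · intro i _ hne
          rcases lt_or_gt_of_ne hne with hlt | hgt
          · have hdi : d i ≤ p.1 := by
              have := hmono hlt
              simp only [hp]; omega
            rw [(hGzero i p).mpr hdi, mul_zero]
          · rw [ih i (by omega), zero_mul]
        · intro hj'; exact absurd (Finset.mem_univ j) hj'
    intro j; exact key k j (by omega)
  -- finrank of spans of subsets of rows
  have hrank : ∀ t : Finset (Fin k), finrank F (Submodule.span F (G '' ↑t)) = t.card := by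
    intro t
    have h1 : LinearIndependent F (fun x : ↑(G '' ↑t) => (x : Fin n → F)) :=
      LinearIndepOn.id_image (s := (t : Set (Fin k))) (hGli.comp _ Subtype.val_injective)
    rw [finrank_span_set_eq_card h1, Set.toFinset_image]
    rw [Finset.toFinset_coe, Finset.card_image_of_injective _ hGli.injective]
  have hCk : finrank F 𝒞 = k := by
    rw [h𝒞, ← Set.image_univ, ← Finset.coe_univ, hrank]
    simp
  -- support of span of first rows
  have hsuppD : ∀ r : Fin k, hsupp (Submodule.span F (G '' {i | i ≤ r})) = {l : Fin n | l.1 < d r} := by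
    intro r
    ext l
    simp only [hsupp, Set.mem_setOf_eq]
    constructor
    · rintro ⟨x, hx, hxl⟩
      by_contra hcon
      push_neg at hcon
      have hker : Submodule.span F (G '' {i | i ≤ r}) ≤ LinearMap.ker (LinearMap.proj (R := F) (φ := fun _ : Fin n => F) l) := by
        rw [Submodule.span_le]
        rintro y ⟨i, hi, rfl⟩
        simp only [SetLike.mem_coe, LinearMap.mem_ker, LinearMap.proj_apply]
        exact (hGzero i l).mpr (le_trans (hmono.monotone hi) hcon)
      have := hker hx
      simp only [LinearMap.mem_ker, LinearMap.proj_apply] at this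
      exact hxl this
    · intro hl
      refine ⟨G r, Submodule.subset_span ⟨r, le_refl r, rfl⟩, ?_⟩
      intro h0
      have := (hGzero r l).mp h0
      omega
  have hwtD : ∀ r : Fin k, hwt (Submodule.span F (G '' {i | i ≤ r})) = d r := by
    intro r
    rw [hwt, hsuppD r]
    have : {l : Fin n | l.1 < d r} = ↑(Finset.univ.filter (fun l : Fin n => l.1 < d r)) := by
      ext l; simp
    rw [this, Set.ncard_coe_finset, card_filter_lt_fin n (d r) (hlast r)]
  -- the set {i | i ≤ r} as a Finset
  have hIic : ∀ r : Fin k, ({i | i ≤ r} : Set (Fin k)) = ↑(Finset.Iic r) := by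
    intro r; ext i; simp
  have hrankD : ∀ r : Fin k, finrank F (Submodule.span F (G '' {i | i ≤ r})) = r.1 + 1 := by
    intro r
    rw [hIic r, hrank, Fin.card_Iic]
  have hDle : ∀ r : Fin k, Submodule.span F (G '' {i | i ≤ r}) ≤ 𝒞 := by
    intro r
    rw [h𝒞]
    exact Submodule.span_mono ((Set.image_subset_range G _).trans (by rfl))
  -- evaluation map
  set ev : Polynomial F →ₗ[F] (Fin n → F) := LinearMap.pi (fun l => Polynomial.leval (α l)) with hev
  have hevf : ∀ (g : Polynomial F) (l : Fin n), ev g l = g.eval (α l) := by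
    intro g l; simp [hev, Polynomial.leval_apply]
  have hdegf : ∀ i : Fin k, (f i).natDegree = n - d i ∧ f i ≠ 0 := by
    intro i
    have hmon : (f i).Monic := by
      rw [hf i]; exact Polynomial.monic_prod_of_monic _ _ (fun s _ => Polynomial.monic_X_sub_C _)
    constructor
    · rw [hf i, Polynomial.natDegree_prod _ _ (fun s _ => Polynomial.X_sub_C_ne_zero _)]
      simp only [Polynomial.natDegree_X_sub_C]
      rw [Finset.sum_const, smul_eq_mul, mul_one, card_filter_le_fin n (d i) (hlast i)]
    · exact hmon.ne_zero
  -- lower bound for generalized Hamming weights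
  have hlow : ∀ (r : Fin k) (𝒟 : Submodule F (Fin n → F)), 𝒟 ≤ 𝒞 → r.1 + 1 ≤ finrank F 𝒟 →
      d r ≤ hwt 𝒟 := by
    intro r 𝒟 hle hrk
    set W : Submodule F (Fin n → F) := Submodule.span F (G '' ↑(Finset.Ici r)) with hWdef
    have hWrank : finrank F W = k - r.1 := by rw [hWdef, hrank, Fin.card_Ici]
    have hWC : W ≤ 𝒞 := by rw [h𝒞, hWdef]; exact Submodule.span_mono (Set.image_subset_range G _)
    have hsup : finrank F ↥(𝒟 ⊔ W) ≤ k := by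
      rw [← hCk]; exact Submodule.finrank_mono (sup_le hle hWC)
    have heq := Submodule.finrank_sup_add_finrank_inf_eq 𝒟 W
    have hposI : 0 < finrank F ↥(𝒟 ⊓ W) := by omega
    obtain ⟨x, hxne⟩ := finrank_pos_iff_exists_ne_zero.mp hposI
    obtain ⟨hx𝒟, hxW⟩ := Submodule.mem_inf.mp x.2
    have hxne' : (x : Fin n → F) ≠ 0 := fun h => hxne (Subtype.ext h)
    have hWev : W ≤ Submodule.map ev (Polynomial.degreeLT F (n - d r + 1)) := by
      rw [hWdef, Submodule.span_le]
      rintro y ⟨i, hi, rfl⟩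
      simp only [Finset.coe_Ici, Set.mem_Ici] at hi
      refine ⟨f i, ?_, ?_⟩
      · simp only [SetLike.mem_coe]
        rw [Polynomial.mem_degreeLT]
        calc (f i).degree ≤ ((f i).natDegree : WithBot ℕ) := Polynomial.degree_le_natDegree
          _ < ((n - d r + 1 : ℕ) : WithBot ℕ) := by
              rw [(hdegf i).1]
              have h1 := hmono.monotone hi
              exact_mod_cast by omega
      · ext l; rw [hevf, ← hG]
    obtain ⟨g, hgdeg, hgx⟩ := hWev hxW
    have hg0 : g ≠ 0 := by rintro rfl; apply hxne'; rw [← hgx]; simp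
    have hgnat : g.natDegree ≤ n - d r := by
      have := (Polynomial.natDegree_lt_iff_degree_lt hg0).mpr (Polynomial.mem_degreeLT.mp hgdeg)
      omega
    set Z : Finset (Fin n) := Finset.univ.filter (fun l => (x : Fin n → F) l = 0) with hZ
    have hZcard : Z.card ≤ n - d r := by
      have hsub : ∀ l ∈ Z, α l ∈ g.roots.toFinset := by
        intro l hl
        rw [Multiset.mem_toFinset, Polynomial.mem_roots']
        refine ⟨hg0, ?_⟩
        have h0 : (x : Fin n → F) l = 0 := (Finset.mem_filter.mp hl).2
        rw [← hgx, hevf] at h0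
        exact h0
      calc Z.card ≤ g.roots.toFinset.card := Finset.card_le_card_of_injOn α hsub (hα.injOn)
        _ ≤ Multiset.card g.roots := Multiset.toFinset_card_le _
        _ ≤ g.natDegree := Polynomial.card_roots' g
        _ ≤ n - d r := hgnat
    have hsupx : d r ≤ (Finset.univ.filter (fun l => ¬ (x : Fin n → F) l = 0)).card := by
      have h2 := Finset.card_filter_add_card_filter_not
        (s := (Finset.univ : Finset (Fin n))) (fun l => (x : Fin n → F) l = 0)
      simp only [Finset.card_univ, Fintype.card_fin] at h2
      have h3 := hlast r
      rw [← hZ] at h2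
      omega
    rw [hwt]
    calc d r ≤ (Finset.univ.filter (fun l => ¬ (x : Fin n → F) l = 0)).card := hsupx
      _ = ({l : Fin n | (x : Fin n → F) l ≠ 0}).ncard := by
          rw [← Set.ncard_coe_finset]; congr 1; ext l; simp
      _ ≤ (hsupp 𝒟).ncard := Set.ncard_le_ncard (fun l hl => ⟨(x : Fin n → F), hx𝒟, hl⟩) (Set.toFinite _)
  have hgwr : ∀ r : Fin k, hgw 𝒞 (r.1 + 1) = d r := by
    intro r
    apply le_antisymm
    · apply Nat.sInf_le
      exact ⟨Submodule.span F (G '' {i | i ≤ r}), hDle r, le_of_eq (hrankD r).symm, hwtD r⟩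
    · apply le_csInf
      · exact ⟨d r, Submodule.span F (G '' {i | i ≤ r}), hDle r, le_of_eq (hrankD r).symm, hwtD r⟩
      · rintro w ⟨𝒟, h1, h2, rfl⟩
        exact hlow r 𝒟 h1 h2
  have e1 : ∀ m : ℕ, m ≤ k → finrank F (Submodule.span F (G '' {i : Fin k | i.1 < m})) = m := by
    intro m hm
    have hs : {i : Fin k | i.1 < m} = ↑(Finset.univ.filter (fun i : Fin k => i.1 < m)) := by
      ext; simp
    rw [hs, hrank, card_filter_lt_fin k m hm]
  refine ⟨hCk, hgwr, hwtD, ?_⟩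
  refine ⟨fun j => Submodule.span F (G '' {i : Fin k | i.1 < j}), ?_, ?_, ?_, ?_⟩
  · show Submodule.span F (G '' {i : Fin k | i.1 < 0}) = ⊥
    have hs : {i : Fin k | i.1 < 0} = (∅ : Set (Fin k)) := by ext i; simp
    rw [hs, Set.image_empty, Submodule.span_empty]
  · rw [hCk]
    show Submodule.span F (G '' {i : Fin k | i.1 < k}) = 𝒞
    have hs : {i : Fin k | i.1 < k} = Set.univ := by ext i; simp [i.2]
    rw [hs, Set.image_univ, h𝒞]
  · intro j hj
    rw [hCk] at hj
    show Submodule.span F (G '' {i : Fin k | i.1 < j}) < Submodule.span F (G '' {i : Fin k | i.1 < j + 1})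
    have hle' : Submodule.span F (G '' {i : Fin k | i.1 < j})
        ≤ Submodule.span F (G '' {i : Fin k | i.1 < j + 1}) :=
      Submodule.span_mono (Set.image_mono (fun i hi => by
        simp only [Set.mem_setOf_eq] at hi ⊢; omega))
    refine lt_of_le_of_ne hle' ?_
    intro hEq
    have h1 := e1 j (le_of_lt hj)
    have h2 := e1 (j + 1) hj
    rw [hEq] at h1
    omega
  · intro r h1 h2
    rw [hCk] at h2
    show hwt (Submodule.span F (G '' {i : Fin k | i.1 < r})) = hgw 𝒞 r
    set r' : Fin k := ⟨r - 1, by omega⟩ with hr'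
    have hset : {i : Fin k | i.1 < r} = {i : Fin k | i ≤ r'} := by
      ext i
      simp only [Set.mem_setOf_eq, Fin.le_def, hr']
      omega
    rw [hset, hwtD r']
    have hr1 : r'.1 + 1 = r := by simp only [hr']; omega
    rw [← hr1, hgwr r']
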